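/- Let H = [[1,0],[0,−1]], X₊ = [[0,1],[0,0]], X₋ = [[0,0],[1,0]] in the space of real 2 × 2 matrices, and let P be the linear map on the span of {H, X₊, X₋} determined by P(H) = H/2, P(X₊) = X₊, P(X₋) = 0. Fix ω, x₀ ∈ ℝ and an invertible 2 × 2 real matrix u₀, and define ξ(t) = (ω/2)H + e^{−ωt}x₀·X₊ and u(t) = u₀·exp(−(ωt/2)H), where exp is the matrix exponential. Then for every t: (i) ξ'(t) = 2·[P(ξ(t)), ξ(t)] (matrix commutator), and (ii) u(t) is invertible with u(t)⁻¹·u'(t) = 2·(P(ξ(t)) − ξ(t)) = −(ω/2)H. -/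

import Mathlib

attribute [local instance] Matrix.normedAddCommGroup Matrix.normedSpace

/-- Explicit solution of the point-particle pure-quasitriangular model on
`SL₂(ℝ)`: with `ξ(t) = (ω/2)H + e^{−ωt}x₀X₊` and `u(t) = u₀·exp(−(ωt/2)H)`,
one has `ξ' = 2[P ξ, ξ]` and `u⁻¹u' = 2(P ξ − ξ) = −(ω/2)H`, where `P` is
linear with `P H = H/2`, `P X₊ = X₊`, `P X₋ = 0`. -/
theorem stmt17 (ω x₀ : ℝ) (u₀ : Matrix (Fin 2) (Fin 2) ℝ) (hu₀ : IsUnit u₀)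
    (H Xp Xm : Matrix (Fin 2) (Fin 2) ℝ)
    (hH : H = !![1, 0; 0, -1]) (hXp : Xp = !![0, 1; 0, 0]) (hXm : Xm = !![0, 0; 1, 0])
    (P : Matrix (Fin 2) (Fin 2) ℝ →ₗ[ℝ] Matrix (Fin 2) (Fin 2) ℝ)
    (hPH : P H = (1 / 2 : ℝ) • H) (hPXp : P Xp = Xp) (hPXm : P Xm = 0) :
    let ξ : ℝ → Matrix (Fin 2) (Fin 2) ℝ :=
      fun t => (ω / 2) • H + (Real.exp (-(ω * t)) * x₀) • Xp
    let u : ℝ → Matrix (Fin 2) (Fin 2) ℝ :=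
      fun t => u₀ * NormedSpace.exp ((-(ω * t / 2)) • H)
    ∀ t : ℝ,
      HasDerivAt ξ ((2 : ℝ) • (P (ξ t) * ξ t - ξ t * P (ξ t))) t ∧
      IsUnit (u t) ∧
      (u t)⁻¹ * deriv u t = (2 : ℝ) • (P (ξ t) - ξ t) ∧
      (2 : ℝ) • (P (ξ t) - ξ t) = (-(ω / 2)) • H := by
  intro ξ u t
  -- closed form of the exponential
  have hexp : ∀ s : ℝ, NormedSpace.exp (s • H) = !![Real.exp s, 0; 0, Real.exp (-s)] := by
    intro s
    have h1 : s • H = Matrix.diagonal ![s, -s] := by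
      subst hH; ext i j; fin_cases i <;> fin_cases j <;> simp [Matrix.diagonal]
    rw [h1, Matrix.exp_diagonal]
    ext i j
    fin_cases i <;> fin_cases j <;>
      simp [Matrix.diagonal, Pi.coe_exp, ← Real.exp_eq_exp_ℝ]
  -- value of P on ξ t
  have hPξ : P (ξ t) = (ω / 2 * (1 / 2)) • H + (Real.exp (-(ω * t)) * x₀) • Xp := by
    show P ((ω / 2) • H + (Real.exp (-(ω * t)) * x₀) • Xp) = _
    rw [map_add, map_smul, map_smul, hPH, hPXp, smul_smul]
  -- the ξ derivative
  have hξ' : HasDerivAt ξ ((Real.exp (-(ω * t)) * -ω * x₀) • Xp) t := by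
    have h1 : HasDerivAt (fun s : ℝ => -(ω * s)) (-ω) t := by
      simpa [Pi.neg_def] using ((hasDerivAt_id t).const_mul ω).neg
    have h2 : HasDerivAt (fun s : ℝ => Real.exp (-(ω * s)) * x₀)
        (Real.exp (-(ω * t)) * -ω * x₀) t := by
      have := (((Real.hasDerivAt_exp (-(ω * t))).comp t h1)).mul_const x₀; exact this
    have := ((hasDerivAt_const t ((ω / 2) • H)).add (h2.smul_const Xp)); rw [zero_add] at this; exact this
  have hval : ((2 : ℝ) • (P (ξ t) * ξ t - ξ t * P (ξ t)))
      = (Real.exp (-(ω * t)) * -ω * x₀) • Xp := by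
    rw [hPξ]
    show (2 : ℝ) • (((ω / 2 * (1 / 2)) • H + (Real.exp (-(ω * t)) * x₀) • Xp)
        * ((ω / 2) • H + (Real.exp (-(ω * t)) * x₀) • Xp)
        - ((ω / 2) • H + (Real.exp (-(ω * t)) * x₀) • Xp)
        * ((ω / 2 * (1 / 2)) • H + (Real.exp (-(ω * t)) * x₀) • Xp)) = _
    subst hH hXp
    ext i j
    fin_cases i <;> fin_cases j <;>
      simp [Matrix.mul_apply, Fin.sum_univ_two] <;> ring
  refine ⟨hval ▸ hξ', ?_, ?_, ?_⟩
  · exact hu₀.mul ((Matrix.isUnit_iff_isUnit_det _).2 (by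
      rw [hexp]; simp [Matrix.det_fin_two_of, ← Real.exp_add]))
  · -- derivative of u
    have hufun : u = fun s : ℝ => Real.exp (-(ω * s / 2)) • (u₀ * !![1,0;0,0])
        + Real.exp (ω * s / 2) • (u₀ * !![0,0;0,1]) := by
      funext s
      show u₀ * NormedSpace.exp ((-(ω * s / 2)) • H) = _
      rw [hexp]
      ext i j
      fin_cases i <;> fin_cases j <;>
        simp [Matrix.mul_apply, Fin.sum_univ_two] <;> ring_nf
    have h1 : HasDerivAt (fun s : ℝ => Real.exp (-(ω * s / 2)))
        (Real.exp (-(ω * t / 2)) * -(ω / 2)) t := by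
      have : HasDerivAt (fun s : ℝ => -(ω * s / 2)) (-(ω / 2)) t := by
        simpa [Pi.neg_def] using (((hasDerivAt_id t).const_mul ω).div_const 2).neg
      exact (Real.hasDerivAt_exp _).comp t this
    have h2 : HasDerivAt (fun s : ℝ => Real.exp (ω * s / 2))
        (Real.exp (ω * t / 2) * (ω / 2)) t := by
      have : HasDerivAt (fun s : ℝ => ω * s / 2) (ω / 2) t := by
        simpa using ((hasDerivAt_id t).const_mul ω).div_const 2
      exact (Real.hasDerivAt_exp _).comp t this
    have hu' : HasDerivAt u ((Real.exp (-(ω * t / 2)) * -(ω / 2)) • (u₀ * !![1,0;0,0])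
        + (Real.exp (ω * t / 2) * (ω / 2)) • (u₀ * !![0,0;0,1])) t := by
      rw [hufun]
      exact (h1.smul_const _).add (h2.smul_const _)
    have hderiv := hu'.deriv
    erw [hderiv]
    -- deriv u t = u t * (-(ω/2)) • H
    have hmul : ((Real.exp (-(ω * t / 2)) * -(ω / 2)) • (u₀ * !![1,0;0,0])
        + (Real.exp (ω * t / 2) * (ω / 2)) • (u₀ * !![0,0;0,1]))
        = u t * ((-(ω / 2)) • H) := by
      show _ = u₀ * NormedSpace.exp ((-(ω * t / 2)) • H) * ((-(ω / 2)) • H)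
      rw [hexp, hH]
      ext i j
      fin_cases i <;> fin_cases j <;>
        simp [Matrix.mul_apply, Fin.sum_univ_two] <;> ring
    rw [hmul]
    have hudet : IsUnit (u t).det := by
      apply (Matrix.isUnit_iff_isUnit_det _).1
      exact hu₀.mul ((Matrix.isUnit_iff_isUnit_det _).2 (by
        rw [hexp]; simp [Matrix.det_fin_two_of, ← Real.exp_add]))
    rw [← Matrix.mul_assoc, Matrix.nonsing_inv_mul _ hudet, Matrix.one_mul]
    rw [hPξ]
    show (-(ω / 2)) • H = (2 : ℝ) • ((ω / 2 * (1 / 2)) • H + (Real.exp (-(ω * t)) * x₀) • Xp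
        - ((ω / 2) • H + (Real.exp (-(ω * t)) * x₀) • Xp))
    module
  · rw [hPξ]
    show (2 : ℝ) • ((ω / 2 * (1 / 2)) • H + (Real.exp (-(ω * t)) * x₀) • Xp
        - ((ω / 2) • H + (Real.exp (-(ω * t)) * x₀) • Xp)) = (-(ω / 2)) • H
    module
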